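/- Let A ⊆ B(G_μ) and B ⊆ B(G_ν) be von Neumann algebras with cyclic and separating unit vectors Λ_μ and Λ_ν defining faithful normal states μ(a) = ⟨Λ_μ, aΛ_μ⟩ and ν(b) = ⟨Λ_ν, bΛ_ν⟩, and let ω be a coupling of (A, μ) and (B, ν) with cyclic representation (H_ω, π_ω, Ω_ω). Let H_ν be the closure of π_ω(1 ⊗ B′)Ω_ω in H_ω, P_ν the orthogonal projection of H_ω onto H_ν, ι : H_ν → H_ω the inclusion, and u_ν : G_ν → H_ν the unitary determined by u_ν b′Λ_ν = π_ω(1 ⊗ b′)Ω_ω for b′ ∈ B′. Then for every a ∈ A, the operator u_ν* ι* π_ω(a ⊗ 1) ι u_ν = u_ν* P_ν π_ω(a ⊗ 1) u_ν on G_ν belongs to the von Neumann algebra B. -/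

import Mathlib

open scoped ComplexOrder

noncomputable section

noncomputable instance {H : Type} [NormedAddCommGroup H] [InnerProductSpace ℂ H]
    [CompleteSpace H] (A : VonNeumannAlgebra H) : Algebra ℂ ↥A :=
  inferInstanceAs (Algebra ℂ ↥A.toStarSubalgebra)

variable {Gμ Gν Hw : Type}
  [NormedAddCommGroup Gμ] [InnerProductSpace ℂ Gμ] [CompleteSpace Gμ]
  [NormedAddCommGroup Gν] [InnerProductSpace ℂ Gν] [CompleteSpace Gν]
  [NormedAddCommGroup Hw] [InnerProductSpace ℂ Hw] [CompleteSpace Hw]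

/-- A coupling of `(A, μ)` and `(B, ν)`: a state on the algebraic tensor product `A ⊙ B′`
(equivalently, a bilinear functional, positive on elements of the form `x* x`) whose
marginals are `μ` and `ν′`. -/
def IsCoupling (A : VonNeumannAlgebra Gμ) (B : VonNeumannAlgebra Gν) (Λμ : Gμ) (Λν : Gν)
    (ω : ↥A →ₗ[ℂ] ↥B.commutant →ₗ[ℂ] ℂ) : Prop :=
  (∀ (n : ℕ) (a : Fin n → ↥A) (b : Fin n → ↥B.commutant),
      0 ≤ ∑ i, ∑ j, ω (star (a i) * a j) (star (b i) * b j)) ∧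
  (∀ a : ↥A, ω a 1 = inner ℂ Λμ ((a : Gμ →L[ℂ] Gμ) Λμ)) ∧
  (∀ b' : ↥B.commutant, ω 1 b' = inner ℂ Λν ((b' : Gν →L[ℂ] Gν) Λν))

/-- With `(H_ω, π_ω, Ω_ω)` a cyclic representation of `(A ⊙ B′, ω)`
(given by the pair of commuting unital *-homomorphisms `π₁ = π_ω(· ⊗ 1)` and
`π₂ = π_ω(1 ⊗ ·)`), `H_ν` the closure of `π_ω(1 ⊗ B′)Ω_ω`, and `u_ν : G_ν → H_ν` the
unitary with `u_ν b′Λ_ν = π_ω(1 ⊗ b′)Ω_ω`, the compression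
`u_ν* ι* π_ω(a ⊗ 1) ι u_ν = u_ν* P_ν π_ω(a ⊗ 1) u_ν` belongs to `B` for every `a ∈ A`. -/
theorem compression_mem
    (A : VonNeumannAlgebra Gμ) (B : VonNeumannAlgebra Gν) (Λμ : Gμ) (Λν : Gν)
    (hΛμunit : ‖Λμ‖ = 1) (hΛνunit : ‖Λν‖ = 1)
    (hΛμcyc : Dense (Set.range fun a : ↥A => (a : Gμ →L[ℂ] Gμ) Λμ))
    (hΛμsep : ∀ a : ↥A, (a : Gμ →L[ℂ] Gμ) Λμ = 0 → a = 0)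
    (hΛνcyc : Dense (Set.range fun b : ↥B => (b : Gν →L[ℂ] Gν) Λν))
    (hΛνsep : ∀ b : ↥B, (b : Gν →L[ℂ] Gν) Λν = 0 → b = 0)
    (ω : ↥A →ₗ[ℂ] ↥B.commutant →ₗ[ℂ] ℂ) (hω : IsCoupling A B Λμ Λν ω)
    -- a cyclic representation of `(A ⊙ B′, ω)`
    (π₁ : ↥A →⋆ₐ[ℂ] (Hw →L[ℂ] Hw)) (π₂ : ↥B.commutant →⋆ₐ[ℂ] (Hw →L[ℂ] Hw)) (Ωw : Hw)
    (hcomm : ∀ (a : ↥A) (b' : ↥B.commutant), Commute (π₁ a) (π₂ b'))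
    (hcyc : Dense (Submodule.span ℂ
      (Set.range fun p : ↥A × ↥B.commutant => π₁ p.1 (π₂ p.2 Ωw)) : Set Hw))
    (hrep : ∀ (a : ↥A) (b' : ↥B.commutant), ω a b' = inner ℂ Ωw (π₁ a (π₂ b' Ωw)))
    -- the unitary `u_ν : G_ν → H_ν ⊆ H_ω`
    (uν : Gν →L[ℂ] Hw) (huνiso : ∀ ξ : Gν, ‖uν ξ‖ = ‖ξ‖)
    (huν : ∀ b' : ↥B.commutant, uν ((b' : Gν →L[ℂ] Gν) Λν) = π₂ b' Ωw)
    (huνrange : Set.range uν = closure (Set.range fun b' : ↥B.commutant => π₂ b' Ωw)) :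
    ∀ a : ↥A,
      (ContinuousLinearMap.adjoint uν).comp ((π₁ a).comp uν) ∈ B := by
  classical
  -- The linear map `b' ↦ b' Λν`.
  set L : ↥B.commutant →ₗ[ℂ] Gν :=
    { toFun := fun c' => (c' : Gν →L[ℂ] Gν) Λν
      map_add' := by intro x y; simp
      map_smul' := by intro r x; rfl } with hL
  set M : Submodule ℂ Gν := LinearMap.range L with hM
  set K : Submodule ℂ Gν := M.topologicalClosure with hK
  haveI : CompleteSpace K := M.isClosed_topologicalClosure.completeSpace_coe
  -- `K` is invariant under the commutant of `B`.
  have hinv : ∀ g ∈ B.commutant, ∀ x ∈ K, g x ∈ K := by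
    intro g hg x hx
    have hxc : x ∈ closure (M : Set Gν) := hx
    have : g x ∈ closure (M : Set Gν) := by
      refine map_mem_closure g.continuous hxc ?_
      rintro y ⟨c', rfl⟩
      exact ⟨(⟨g, hg⟩ : ↥B.commutant) * c', by simp [hL]⟩
    exact this
  -- The orthogonal projection onto `K`, as an operator on `Gν`.
  set P : Gν →L[ℂ] Gν := K.subtypeL.comp (K.orthogonalProjectionOnto) with hP
  have hPmemK : ∀ x : Gν, P x ∈ K := fun x => (K.orthogonalProjectionOnto x).2
  have hPK : ∀ x ∈ K, P x = x := fun x hx => by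
    simpa [hP] using (Submodule.starProjection_eq_self_iff (K := K)).2 hx
  have hPperp : ∀ x : Gν, x - P x ∈ Kᗮ := fun x =>
    Submodule.sub_starProjection_mem_orthogonal (K := K) x
  -- `P` commutes with every element of the commutant, hence `P ∈ B`.
  have hPcomm : ∀ g ∈ B.commutant, g * P = P * g := by
    intro g hg
    ext x
    have h1 : g (P x) ∈ K := hinv g hg _ (hPmemK x)
    have h2 : g (x - P x) ∈ Kᗮ := by
      rw [Submodule.mem_orthogonal]
      intro k hk
      have hgk : (star g) k ∈ K :=
        hinv (star g) (star_mem hg) _ hk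
      have heq : (inner ℂ k (g (x - P x)) : ℂ) = inner ℂ ((star g) k) (x - P x) := by
        rw [ContinuousLinearMap.star_eq_adjoint]
        exact (ContinuousLinearMap.adjoint_inner_left g (x - P x) k).symm
      rw [heq]
      exact (Submodule.mem_orthogonal _ _).1 (hPperp x) _ hgk
    have hx : g x = g (P x) + g (x - P x) := by
      rw [← map_add]; congr 1; abel
    have hzero : P (g (x - P x)) = 0 := by
      have h0 : K.orthogonalProjectionOnto (g (x - P x)) = 0 :=
        Submodule.orthogonalProjectionOnto_apply_of_mem_orthogonal h2
      show K.subtypeL (K.orthogonalProjectionOnto (g (x - P x))) = 0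
      rw [h0]
      rfl
    have hPgx : P (g x) = g (P x) := by
      rw [hx, map_add, hzero, add_zero, hPK _ h1]
    simpa [hP] using hPgx.symm
  have hPB : P ∈ B := by
    rw [← B.commutant_commutant]
    exact VonNeumannAlgebra.mem_commutant_iff.2 hPcomm
  -- `Λν ∈ K`, so `(1 - P) Λν = 0`; since `Λν` is separating, `P = 1` and `K = ⊤`.
  have hΛνK : Λν ∈ K := by
    refine Submodule.le_topologicalClosure M ?_
    exact ⟨1, by simp [hL]⟩
  have hPone : P = 1 := by
    have hmem : (1 : Gν →L[ℂ] Gν) - P ∈ B := sub_mem (one_mem B) hPB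
    have h0 : ((⟨_, hmem⟩ : ↥B) : Gν →L[ℂ] Gν) Λν = 0 := by
      simp [hPK _ hΛνK]
    have := hΛνsep _ h0
    have h1P : (1 : Gν →L[ℂ] Gν) - P = 0 := congrArg Subtype.val this
    linear_combination (norm := module) -h1P
  -- Hence `range L` is dense in `Gν`.
  have hKtop : ∀ x : Gν, x ∈ K := by
    intro x
    have hx := hPmemK x
    rw [hPone] at hx
    simpa using hx
  have hdense : Dense (M : Set Gν) := by
    intro x
    have hx : x ∈ (M.topologicalClosure : Set Gν) := hKtop x
    rwa [Submodule.topologicalClosure_coe] at hx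
  -- The intertwining relation `uν ∘ b' = π₂ b' ∘ uν`.
  have hint : ∀ b' : ↥B.commutant,
      uν.comp (b' : Gν →L[ℂ] Gν) = (π₂ b').comp uν := by
    intro b'
    apply ContinuousLinearMap.ext
    have := Continuous.ext_on hdense
      (uν.comp (b' : Gν →L[ℂ] Gν)).continuous ((π₂ b').comp uν).continuous ?_
    · exact fun x => congrFun this x
    · rintro y ⟨c', rfl⟩
      have h1 : (b' : Gν →L[ℂ] Gν) ((c' : Gν →L[ℂ] Gν) Λν)
          = ((b' * c' : ↥B.commutant) : Gν →L[ℂ] Gν) Λν := by simp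
      simp only [ContinuousLinearMap.comp_apply, hL, LinearMap.coe_mk, AddHom.coe_mk]
      rw [h1, huν, huν, map_mul]
      simp
  -- The adjoint intertwining relation.
  have hadj : ∀ b' : ↥B.commutant,
      (ContinuousLinearMap.adjoint uν).comp (π₂ b')
        = (b' : Gν →L[ℂ] Gν).comp (ContinuousLinearMap.adjoint uν) := by
    intro b'
    have h := congrArg ContinuousLinearMap.adjoint (hint (star b'))
    rw [ContinuousLinearMap.adjoint_comp, ContinuousLinearMap.adjoint_comp] at h
    have e1 : ContinuousLinearMap.adjoint ((star b' : ↥B.commutant) : Gν →L[ℂ] Gν)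
        = (b' : Gν →L[ℂ] Gν) := by
      rw [← ContinuousLinearMap.star_eq_adjoint]
      simp
    have e2 : ContinuousLinearMap.adjoint (π₂ (star b')) = π₂ b' := by
      rw [← ContinuousLinearMap.star_eq_adjoint, map_star, star_star]
    rw [e1, e2] at h
    exact h.symm
  -- Conclusion.
  intro a
  rw [← B.commutant_commutant]
  refine VonNeumannAlgebra.mem_commutant_iff.2 ?_
  intro g hg
  set b' : ↥B.commutant := ⟨g, hg⟩ with hb'
  have hgb : g = (b' : Gν →L[ℂ] Gν) := rfl
  have hc := hcomm a b'
  calc g * ((ContinuousLinearMap.adjoint uν).comp ((π₁ a).comp uν))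
      = (b' : Gν →L[ℂ] Gν).comp
          ((ContinuousLinearMap.adjoint uν).comp ((π₁ a).comp uν)) := rfl
    _ = ((b' : Gν →L[ℂ] Gν).comp (ContinuousLinearMap.adjoint uν)).comp
          ((π₁ a).comp uν) := rfl
    _ = ((ContinuousLinearMap.adjoint uν).comp (π₂ b')).comp ((π₁ a).comp uν) := by
          rw [← hadj b']
    _ = (ContinuousLinearMap.adjoint uν).comp ((π₂ b' * π₁ a).comp uν) := rfl
    _ = (ContinuousLinearMap.adjoint uν).comp ((π₁ a * π₂ b').comp uν) := by
          rw [hc.eq]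
    _ = (ContinuousLinearMap.adjoint uν).comp ((π₁ a).comp ((π₂ b').comp uν)) := rfl
    _ = (ContinuousLinearMap.adjoint uν).comp ((π₁ a).comp (uν.comp (b' : Gν →L[ℂ] Gν))) := by
          rw [← hint b']
    _ = ((ContinuousLinearMap.adjoint uν).comp ((π₁ a).comp uν)) * g := rfl
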